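/- arXiv:2103.08471 — 3 statements merged into one kernel-verified Lean document; each statement's English description precedes it below -/
import Mathlib

section
/- Over R = ℚ[x, y], let F = R⁴ with the square-zero differential given by the strictly upper-triangular matrix ∂_F with rows [0, -y, -x, -1], [0,0,0,-x], [0,0,0,y], [0,0,0,0], and let D = R² with differential ∂_D = [[xy, -x²], [y², -xy]]. Conjugating ∂_F by the invertible matrix A with rows [-1,0,0,0], [x,-1,0,0], [y,0,1,0], [0,-y,-x,-1] yields the block matrix [[0,0,0,-1],[0,xy,-x²,0],[0,y²,-xy,0],[0,0,0,0]]; consequently (F, ∂_F) is isomorphic as a differential module to the direct sum of (D, ∂_D) and a contractible differential module of rank 2. -/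
open MvPolynomial

set_option maxHeartbeats 1000000 in
/-- Over `R = ℚ[x,y]`: the flag differential `∂F` on `R⁴` squares to zero; conjugating it by
the invertible matrix `A` yields the displayed block matrix; consequently `(R⁴, ∂F)` is
isomorphic, as a differential module, to the direct sum of `(R², ∂D)` (with
`∂D = [[xy, -x²],[y², -xy]]`) and a contractible rank-2 differential module
(differential `[[0,-1],[0,0]]`). -/
theorem stmt7 :
    let R := MvPolynomial (Fin 2) ℚ
    let x : R := X 0
    let y : R := X 1
    let delF : Matrix (Fin 4) (Fin 4) R :=
      !![0, -y, -x, -1; 0, 0, 0, -x; 0, 0, 0, y; 0, 0, 0, 0]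
    let A : Matrix (Fin 4) (Fin 4) R :=
      !![-1, 0, 0, 0; x, -1, 0, 0; y, 0, 1, 0; 0, -y, -x, -1]
    delF * delF = 0 ∧ IsUnit A ∧
    A * delF * A⁻¹ = !![0, 0, 0, -1; 0, x * y, -x ^ 2, 0; 0, y ^ 2, -(x * y), 0; 0, 0, 0, 0] ∧
    ∃ P : Matrix (Fin 4) (Fin 4) R, IsUnit P ∧
      P * delF * P⁻¹ =
        !![x * y, -x ^ 2, 0, 0; y ^ 2, -(x * y), 0, 0; 0, 0, 0, -1; 0, 0, 0, 0] := by
  intro R x y delF A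
  have hsq : delF * delF = 0 := by
    refine Matrix.ext fun i j => ?_
    fin_cases i <;> fin_cases j <;>
      simp [delF, Matrix.mul_apply, Fin.sum_univ_four, Matrix.vecHead, Matrix.vecTail] <;>
        first | ring | tauto
  set B : Matrix (Fin 4) (Fin 4) R :=
    !![-1, 0, 0, 0; -x, -1, 0, 0; y, 0, 1, 0; 0, y, -x, -1] with hB
  have hAB : A * B = 1 := by
    refine Matrix.ext fun i j => ?_
    fin_cases i <;> fin_cases j <;>
      simp [A, hB, Matrix.mul_apply, Fin.sum_univ_four, Matrix.vecHead, Matrix.vecTail,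
        Matrix.one_apply] <;> first | ring | tauto
  have hA : IsUnit A := (Matrix.isUnit_iff_isUnit_det A).mpr (Matrix.isUnit_det_of_right_inverse hAB)
  have hAi : A⁻¹ = B := Matrix.inv_eq_right_inv hAB
  have h1 : A * delF =
      !![0, y, x, 1; 0, -(x * y), -x ^ 2, 0; 0, -y ^ 2, -(x * y), 0; 0, 0, 0, 0] := by
    refine Matrix.ext fun i j => ?_
    fin_cases i <;> fin_cases j <;>
      simp [A, delF, Matrix.mul_apply, Fin.sum_univ_four, Matrix.vecHead, Matrix.vecTail] <;>
        first | ring | tauto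
  have hconj : A * delF * A⁻¹ =
      !![0, 0, 0, -1; 0, x * y, -x ^ 2, 0; 0, y ^ 2, -(x * y), 0; 0, 0, 0, 0] := by
    rw [hAi, h1]
    refine Matrix.ext fun i j => ?_
    fin_cases i <;> fin_cases j <;>
      simp [hB, Matrix.mul_apply, Fin.sum_univ_four, Matrix.vecHead, Matrix.vecTail] <;>
        first | ring | tauto
  refine ⟨hsq, hA, hconj, ?_⟩
  set P : Matrix (Fin 4) (Fin 4) R :=
    !![x, -1, 0, 0; y, 0, 1, 0; -1, 0, 0, 0; 0, -y, -x, -1] with hP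
  set Q : Matrix (Fin 4) (Fin 4) R :=
    !![0, 0, -1, 0; -1, 0, -x, 0; 0, 1, y, 0; y, -x, 0, -1] with hQ
  have hPQ : P * Q = 1 := by
    refine Matrix.ext fun i j => ?_
    fin_cases i <;> fin_cases j <;>
      simp [hP, hQ, Matrix.mul_apply, Fin.sum_univ_four, Matrix.vecHead, Matrix.vecTail,
        Matrix.one_apply] <;> first | ring | tauto
  have hPu : IsUnit P := (Matrix.isUnit_iff_isUnit_det P).mpr (Matrix.isUnit_det_of_right_inverse hPQ)
  have hPi : P⁻¹ = Q := Matrix.inv_eq_right_inv hPQ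
  have h2 : P * delF =
      !![0, -(x * y), -x ^ 2, 0; 0, -y ^ 2, -(x * y), 0; 0, y, x, 1; 0, 0, 0, 0] := by
    refine Matrix.ext fun i j => ?_
    fin_cases i <;> fin_cases j <;>
      simp [hP, delF, Matrix.mul_apply, Fin.sum_univ_four, Matrix.vecHead, Matrix.vecTail] <;>
        first | ring | tauto
  refine ⟨P, hPu, ?_⟩
  rw [hPi, h2]
  refine Matrix.ext fun i j => ?_
  fin_cases i <;> fin_cases j <;>
    simp [hQ, Matrix.mul_apply, Fin.sum_univ_four, Matrix.vecHead, Matrix.vecTail] <;>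
      first | ring | tauto
end

section
/- Let (R, 𝔪) be a Noetherian local ring and (F, ∂) a differential module where F is a finitely generated free R-module. Then F decomposes as a direct sum of differential modules F ≅ M ⊕ T, where the differential on M is minimal (maps M into 𝔪M) and T is contractible. -/
open Submodule in
lemma field_decomp' {k V : Type*} [Field k] [AddCommGroup V] [Module k V]
    [FiniteDimensional k V] (φ : V →ₗ[k] V) (hφ : ∀ y, φ (φ y) = 0) :
    ∃ (r s : ℕ) (c : Fin r → V) (x : Fin s → V),
      (∀ j, φ (x j) = 0) ∧
      LinearIndependent k (Sum.elim c (Sum.elim (φ ∘ c) x)) ∧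
      Submodule.span k (Set.range (Sum.elim c (Sum.elim (φ ∘ c) x))) = ⊤ := by
  obtain ⟨C, hC⟩ := (LinearMap.ker φ).exists_isCompl
  set K := LinearMap.ker φ with hK
  set B := C.map φ with hB
  have hBK : B ≤ K := by
    rintro z hz
    obtain ⟨y, -, rfl⟩ := Submodule.mem_map.mp hz
    exact LinearMap.mem_ker.mpr (hφ y)
  obtain ⟨H', hH'⟩ := (B.comap K.subtype).exists_isCompl
  set H := H'.map K.subtype with hH
  have hHK : H ≤ K := Submodule.map_subtype_le _ _
  have hmapB : (B.comap K.subtype).map K.subtype = B := by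
    rw [Submodule.map_comap_subtype, inf_eq_right.mpr hBK]
  have hBH_sup : B ⊔ H = K := by
    have := congrArg (Submodule.map K.subtype) hH'.sup_eq_top
    rwa [Submodule.map_sup, hmapB, Submodule.map_subtype_top] at this
  have hBH_inf : Disjoint B H := by
    have := hH'.disjoint
    rw [disjoint_iff] at this ⊢
    have h2 := congrArg (Submodule.map K.subtype) this
    rwa [Submodule.map_inf _ (Submodule.injective_subtype K), hmapB, Submodule.map_bot] at h2
  let bC := Module.finBasis k C
  let bH := Module.finBasis k H
  set c : Fin (Module.finrank k C) → V := fun i => ((bC i : C) : V) with hc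
  set x : Fin (Module.finrank k H) → V := fun j => ((bH j : H) : V) with hx
  have hC_span : Submodule.span k (Set.range c) = C := by
    have : Set.range c = C.subtype '' Set.range bC := by
      rw [← Set.range_comp]; rfl
    rw [this, ← Submodule.map_span, bC.span_eq, Submodule.map_top, Submodule.range_subtype]
  have hH_span : Submodule.span k (Set.range x) = H := by
    have : Set.range x = H.subtype '' Set.range bH := by
      rw [← Set.range_comp]; rfl
    rw [this, ← Submodule.map_span, bH.span_eq, Submodule.map_top, Submodule.range_subtype]
  have hB_span : Submodule.span k (Set.range (φ ∘ c)) = B := by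
    rw [Set.range_comp, ← Submodule.map_span, hC_span]
  have liC : LinearIndependent k c := bC.linearIndependent.map' C.subtype (Submodule.ker_subtype C)
  have liH : LinearIndependent k x := bH.linearIndependent.map' H.subtype (Submodule.ker_subtype H)
  have liB : LinearIndependent k (φ ∘ c) := by
    apply liC.map
    rw [hC_span]
    exact hC.disjoint.symm
  have liInner : LinearIndependent k (Sum.elim (φ ∘ c) x) := by
    apply liB.sum_type liH
    rw [hB_span, hH_span]
    exact hBH_inf
  have hInner_span : Submodule.span k (Set.range (Sum.elim (φ ∘ c) x)) = K := by
    rw [Set.Sum.elim_range, Submodule.span_union, hB_span, hH_span, hBH_sup]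
  refine ⟨_, _, c, x, fun j => LinearMap.mem_ker.mp (hHK (bH j).2), ?_, ?_⟩
  · apply liC.sum_type liInner
    rw [hC_span, hInner_span]
    exact hC.disjoint.symm
  · rw [Set.Sum.elim_range, Submodule.span_union, hC_span, hInner_span, sup_comm, hC.sup_eq_top]

open IsLocalRing TensorProduct in
lemma basis_lift' {R F : Type*} [CommRing R] [IsNoetherianRing R] [IsLocalRing R]
    [AddCommGroup F] [Module R F] [Module.Free R F] [Module.Finite R F]
    {ι : Type} [Fintype ι] (v : ι → F)
    (b : Module.Basis ι (ResidueField R) (ResidueField R ⊗[R] F))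
    (hb : ∀ i, (1 : ResidueField R) ⊗ₜ[R] v i = b i) :
    ∃ B : Module.Basis ι R F, ∀ i, B i = v i := by
  have hspan : Submodule.span R (Set.range v) = ⊤ :=
    IsLocalRing.span_eq_top_of_tmul_eq_basis (R := R) v b hb
  have hsurj : Function.Surjective (Finsupp.linearCombination R v) := by
    rw [← LinearMap.range_eq_top, Finsupp.range_linearCombination]
    exact hspan
  have hcard : Fintype.card ι = Module.finrank R F := by
    have h1 := Module.finrank_eq_card_basis b
    rw [Module.finrank_baseChange] at h1
    exact h1.symm
  let bF := Module.Free.chooseBasis R F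
  have hcard2 : Fintype.card (Module.Free.ChooseBasisIndex R F) = Fintype.card ι := by
    rw [hcard, Module.finrank_eq_card_chooseBasisIndex]
  let eidx : Module.Free.ChooseBasisIndex R F ≃ ι := Fintype.equivOfCardEq hcard2
  let eF : F ≃ₗ[R] (ι →₀ R) := (bF.reindex eidx).repr
  have hinj : Function.Injective (Finsupp.linearCombination R v) := by
    have hs2 : Function.Surjective (eF.toLinearMap ∘ₗ Finsupp.linearCombination R v) :=
      eF.surjective.comp hsurj
    have := IsNoetherian.injective_of_surjective_endomorphism
      (eF.toLinearMap ∘ₗ Finsupp.linearCombination R v) hs2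
    exact fun a b hab => this (by simp [LinearMap.comp_apply, hab])
  have li : LinearIndependent R v := by
    rw [linearIndependent_iff_injective_finsuppLinearCombination]
    exact hinj
  exact ⟨Module.Basis.mk li hspan.ge, fun i => Module.Basis.mk_apply li hspan.ge i⟩

open IsLocalRing TensorProduct

/-- Minimization: over a Noetherian local ring `(R, 𝔪)`, a finitely generated free
differential module `(F, ∂)` decomposes as a direct sum of differential modules `M ⊕ T`
where the differential on `M` is minimal (lands in `𝔪M`) and `T` is contractible. -/
theorem stmt11 {R F : Type*} [CommRing R] [IsNoetherianRing R] [IsLocalRing R]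
    [AddCommGroup F] [Module R F] [Module.Free R F] [Module.Finite R F]
    (del : F →ₗ[R] F) (hsq : del ∘ₗ del = 0) :
    ∃ M T : Submodule R F,
      IsCompl M T ∧
      (∀ x ∈ M, del x ∈ M) ∧ (∀ x ∈ T, del x ∈ T) ∧
      (∀ x ∈ M, del x ∈ (IsLocalRing.maximalIdeal R) • M) ∧
      (∃ h : F →ₗ[R] F, (∀ x ∈ T, h x ∈ T) ∧ ∀ x ∈ T, h (del x) + del (h x) = x) := by
  classical
  set k := ResidueField R
  have hdd : ∀ y, del (del y) = 0 := fun y => by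
    have := LinearMap.ext_iff.mp hsq y
    simpa using this
  set φ : k ⊗[R] F →ₗ[k] k ⊗[R] F := del.baseChange k with hφdef
  have hφφ : ∀ y, φ (φ y) = 0 := by
    intro y
    have h1 : φ ∘ₗ φ = (del ∘ₗ del).baseChange k := (LinearMap.baseChange_comp del del).symm
    rw [hsq, LinearMap.baseChange_zero] at h1
    have := LinearMap.ext_iff.mp h1 y
    simpa using this
  obtain ⟨r, s, cb, xb, hxb0, li, sp⟩ := field_decomp' φ hφφ
  -- lift the basis to F
  have hq : Function.Surjective (TensorProduct.mk R k F 1) :=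
    TensorProduct.mk_surjective R F k Ideal.Quotient.mk_surjective
  choose c hc using fun i => hq (cb i)
  choose x hx using fun j => hq (xb j)
  have hc' : ∀ i, (1 : k) ⊗ₜ[R] c i = cb i := fun i => hc i
  have hx' : ∀ j, (1 : k) ⊗ₜ[R] x j = xb j := fun j => hx j
  set ι := (Fin r ⊕ (Fin r ⊕ Fin s))
  set v : ι → F := Sum.elim c (Sum.elim (⇑del ∘ c) x) with hv
  let bV : Module.Basis ι k (k ⊗[R] F) := Module.Basis.mk li sp.ge
  have hbV : ∀ i, (1 : k) ⊗ₜ[R] v i = bV i := by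
    rintro (i | i | j) <;>
      simp only [bV, Module.Basis.mk_apply, v, Sum.elim_inl, Sum.elim_inr, Function.comp_apply]
    · exact hc' i
    · have h1 : φ ((1 : k) ⊗ₜ[R] c i) = (1 : k) ⊗ₜ[R] del (c i) := by simp [hφdef]
      rw [← h1, hc' i]
    · exact hx' j
  obtain ⟨B, hB⟩ := basis_lift' v bV hbV
  -- the contraction
  set g : ι → F := Sum.elim (fun _ => (0 : F)) (Sum.elim c (fun _ => (0 : F))) with hg
  set h : F →ₗ[R] F := B.constr R g with hh0
  have hB1 : ∀ i, h (c i) = 0 := fun i => by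
    have := B.constr_basis R g (Sum.inl i)
    rwa [hB] at this
  have hB2 : ∀ i, h (del (c i)) = c i := fun i => by
    have := B.constr_basis R g (Sum.inr (Sum.inl i))
    rwa [hB] at this
  have hB3 : ∀ j, h (x j) = 0 := fun j => by
    have := B.constr_basis R g (Sum.inr (Sum.inr j))
    rwa [hB] at this
  have hhh : ∀ y, h (h y) = 0 := by
    have : h ∘ₗ h = 0 := by
      apply B.ext
      rintro (i | i | j) <;> rw [hB] <;>
        simp [LinearMap.comp_apply, hB1, hB2, hB3, v]
    intro y
    have := LinearMap.ext_iff.mp this y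
    simpa using this
  have hdh : ∀ y, h (del (h y)) = h y := by
    have : h ∘ₗ del ∘ₗ h = h := by
      apply B.ext
      rintro (i | i | j) <;> rw [hB] <;>
        simp [LinearMap.comp_apply, hB1, hB2, hB3, v]
    intro y
    exact LinearMap.ext_iff.mp this y
  -- maximal ideal stability and key minimality estimate
  set S : Submodule R F := (maximalIdeal R) • (⊤ : Submodule R F) with hS
  have hstab : ∀ (f : F →ₗ[R] F), ∀ z ∈ S, f z ∈ S := by
    intro f z hz
    have h1 : f z ∈ Submodule.map f S := Submodule.mem_map_of_mem hz
    rw [hS, Submodule.map_smul''] at h1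
    exact Submodule.smul_mono le_rfl le_top h1
  have hker_tmul : ∀ z : F, (1 : k) ⊗ₜ[R] z = 0 → z ∈ S := by
    intro z hz
    have h1 : quotTensorEquivQuotSMul F (maximalIdeal R)
        ((Ideal.Quotient.mk (maximalIdeal R) 1) ⊗ₜ[R] z)
        = Submodule.Quotient.mk ((1 : R) • z) :=
      quotTensorEquivQuotSMul_mk_tmul (maximalIdeal R) 1 z
    have h2 : (Ideal.Quotient.mk (maximalIdeal R) 1 : R ⧸ maximalIdeal R) ⊗ₜ[R] z = 0 := by
      rw [map_one]; exact hz
    rw [h2, map_zero, one_smul] at h1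
    have h3 : Submodule.Quotient.mk (p := S) z = 0 := h1.symm
    rwa [Submodule.Quotient.mk_eq_zero] at h3
  have hdelx : ∀ j, del (x j) ∈ S := by
    intro j
    apply hker_tmul
    have h1 : φ ((1 : k) ⊗ₜ[R] x j) = (1 : k) ⊗ₜ[R] del (x j) := by simp [hφdef]
    rw [← h1, hx' j, hxb0 j]
  have key3 : ∀ y, del y - del (h (del y)) ∈ S := by
    set D : F →ₗ[R] F := del - del ∘ₗ h ∘ₗ del with hD
    have hbase : ∀ i : ι, D (B i) ∈ S := by
      rintro (i | i | j) <;> rw [hB] <;>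
        simp only [hD, LinearMap.sub_apply, LinearMap.comp_apply, v, Sum.elim_inl, Sum.elim_inr,
          Function.comp_apply]
      · rw [hB2, sub_self]; exact zero_mem S
      · rw [hdd, map_zero, map_zero, sub_zero]; exact zero_mem S
      · exact sub_mem (hdelx j) (hstab del _ (hstab h _ (hdelx j)))
    have hle : Submodule.span R (Set.range ⇑B) ≤ Submodule.comap D S := by
      rw [Submodule.span_le]
      rintro _ ⟨i, rfl⟩
      exact hbase i
    intro y
    have hy : y ∈ Submodule.span R (Set.range ⇑B) := by rw [B.span_eq]; trivial
    exact hle hy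
  -- the idempotent
  set e : F →ₗ[R] F := del ∘ₗ h + h ∘ₗ del with he0
  have he : ∀ y, e y = del (h y) + h (del y) := fun y => rfl
  have hee : ∀ y, e (e y) = e y := by
    intro y
    simp only [he, map_add, hdh, hhh, hdd, map_zero, add_zero, zero_add]
  have hcomm : ∀ y, e (del y) = del (e y) := by
    intro y
    simp only [he, map_add, hdd, map_zero, add_zero, zero_add]
  have hdisj : Disjoint (LinearMap.ker e) (LinearMap.range e) := by
    rw [Submodule.disjoint_def]
    rintro z hz ⟨y, rfl⟩
    rw [← hee y]
    exact LinearMap.mem_ker.mp hz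
  have hcodis : LinearMap.ker e ⊔ LinearMap.range e = ⊤ := by
    rw [eq_top_iff]
    intro w _
    refine Submodule.mem_sup.mpr ⟨w - e w, ?_, e w, ⟨w, rfl⟩, by abel⟩
    rw [LinearMap.mem_ker, map_sub, hee, sub_self]
  refine ⟨LinearMap.ker e, LinearMap.range e, ⟨hdisj, codisjoint_iff.mpr hcodis⟩, ?_, ?_, ?_, ?_⟩
  · intro z hz
    rw [LinearMap.mem_ker, hcomm, LinearMap.mem_ker.mp hz, map_zero]
  · rintro _ ⟨y, rfl⟩
    exact ⟨del y, hcomm y⟩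
  · intro z hz
    have hz0 : e z = 0 := LinearMap.mem_ker.mp hz
    have h1 : h (del z) = - del (h z) := by
      rw [he] at hz0
      linear_combination (norm := module) hz0
    have h2 : del (h (del z)) = 0 := by
      rw [h1, map_neg, hdd, neg_zero]
    have h3 : del z ∈ S := by
      have := key3 z
      rwa [h2, sub_zero] at this
    have h4 : del z ∈ LinearMap.ker e := by
      rw [LinearMap.mem_ker, hcomm, hz0, map_zero]
    have hsup : S ≤ (maximalIdeal R) • (LinearMap.ker e)
        ⊔ (maximalIdeal R) • (LinearMap.range e) := by
      rw [← Submodule.smul_sup, hcodis]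
    obtain ⟨a, ha, b, hb, hab⟩ := Submodule.mem_sup.mp (hsup h3)
    have hbker : b ∈ LinearMap.ker e := by
      have hb' : b = del z - a := by rw [← hab]; abel
      rw [hb']
      exact sub_mem h4 (Submodule.smul_le_right ha)
    have hbrange : b ∈ LinearMap.range e := Submodule.smul_le_right hb
    have hb0 : b = 0 := Submodule.disjoint_def.mp hdisj b hbker hbrange
    rw [← hab, hb0, add_zero]
    exact ha
  · refine ⟨h, ?_, ?_⟩
    · rintro _ ⟨y, rfl⟩
      refine ⟨h y, ?_⟩
      simp only [he, map_add, hhh, map_zero, add_zero, zero_add, hdh]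
    · rintro _ ⟨y, rfl⟩
      have hth : h (del (e y)) + del (h (e y)) = e (e y) := by
        rw [he (e y)]; abel
      rw [hth, hee]
end

section
/- Let R = k[x]/(x²) with deg(x) = 1, let a be an integer, and let D = R(-a) ⊕ R(-1) be the degree-a differential module with differential given by the matrix [[0, x], [0, 0]]. Then the homology of D is isomorphic to k(-a) ⊕ k(-2) as a graded module, which has infinite projective dimension over R, while D itself is a finitely generated free differential module with minimal differential. -/
set_option synthInstance.maxHeartbeats 1000000
set_option maxHeartbeats 1000000

open CategoryTheory

section AuxiliaryLemmas

variable {k : Type} [Field k]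

private theorem aux_xx_sq :
    (Ideal.Quotient.mk (Ideal.span {(Polynomial.X : Polynomial k) ^ 2}) Polynomial.X) *
      (Ideal.Quotient.mk (Ideal.span {(Polynomial.X : Polynomial k) ^ 2}) Polynomial.X) = 0 := by
  rw [← map_mul, ← pow_two, Ideal.Quotient.eq_zero_iff_mem]
  exact Ideal.mem_span_singleton_self _

private theorem aux_ann (c : Polynomial k ⧸ Ideal.span {(Polynomial.X : Polynomial k) ^ 2})
    (h : (Ideal.Quotient.mk (Ideal.span {(Polynomial.X : Polynomial k) ^ 2}) Polynomial.X) * c = 0) :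
    ∃ d, c = (Ideal.Quotient.mk (Ideal.span {(Polynomial.X : Polynomial k) ^ 2}) Polynomial.X) * d := by
  obtain ⟨p, rfl⟩ := Ideal.Quotient.mk_surjective c
  rw [← map_mul, Ideal.Quotient.eq_zero_iff_mem, Ideal.mem_span_singleton] at h
  obtain ⟨q, hq⟩ := h
  have hq' : Polynomial.X * p = Polynomial.X * (Polynomial.X * q) := by
    rw [hq]; ring
  have hp : p = Polynomial.X * q := mul_left_cancel₀ Polynomial.X_ne_zero hq'
  exact ⟨Ideal.Quotient.mk _ q, by rw [hp, map_mul]⟩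

private theorem aux_one_not_mem :
    (1 : Polynomial k ⧸ Ideal.span {(Polynomial.X : Polynomial k) ^ 2}) ∉
      Ideal.span {(Ideal.Quotient.mk (Ideal.span {(Polynomial.X : Polynomial k) ^ 2}) Polynomial.X)} := by
  intro h
  rw [Ideal.mem_span_singleton] at h
  obtain ⟨d, hd⟩ := h
  obtain ⟨p, rfl⟩ := Ideal.Quotient.mk_surjective d
  rw [← map_mul, ← map_one (Ideal.Quotient.mk (Ideal.span {(Polynomial.X : Polynomial k) ^ 2})),
    Ideal.Quotient.eq, Ideal.mem_span_singleton] at hd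
  obtain ⟨q, hq⟩ := hd
  have := congrArg (Polynomial.eval 0) hq
  simp at this

end AuxiliaryLemmas


private theorem part3 {R : Type} [CommRing R] (x : R) (hx2 : x * x = 0)
    (hannR : ∀ c : R, x * c = 0 → ∃ d, c = x * d)
    (del : R × R →ₗ[R] R × R) (hdel : ∀ p : R × R, del p = (x * p.2, 0)) :
    Nonempty ((LinearMap.ker del ⧸ (LinearMap.range del).comap (LinearMap.ker del).subtype)
      ≃ₗ[R] ((R ⧸ Ideal.span {x}) × (R ⧸ Ideal.span {x}))) := by
  set I : Ideal R := Ideal.span {x} with hI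
  set φ : R × R →ₗ[R] R × R := LinearMap.prodMap LinearMap.id (LinearMap.mulLeft R x) with hφdef
  have hφ : ∀ p : R × R, φ p ∈ LinearMap.ker del := by
    intro p
    rw [LinearMap.mem_ker, hdel]
    have : φ p = (p.1, x * p.2) := rfl
    rw [this]
    show ((x * (x * p.2) : R), (0 : R)) = 0
    rw [← mul_assoc, hx2, zero_mul]
    rfl
  set χ : R × R →ₗ[R] LinearMap.ker del := LinearMap.codRestrict _ φ hφ with hχdef
  set Hsub := (LinearMap.range del).comap (LinearMap.ker del).subtype with hHsub
  set f : R × R →ₗ[R] (LinearMap.ker del ⧸ Hsub) := Hsub.mkQ.comp χ with hfdef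
  have hχap : ∀ u v : R, ((χ (u, v)) : R × R) = (u, x * v) := fun u v => rfl
  have hfsurj : Function.Surjective f := by
    intro z
    obtain ⟨⟨⟨r, s⟩, hmem⟩, rfl⟩ := Submodule.mkQ_surjective _ z
    rw [LinearMap.mem_ker, hdel] at hmem
    have hs : x * s = 0 := congrArg Prod.fst hmem
    obtain ⟨t, ht⟩ := hannR s hs
    refine ⟨(r, t), ?_⟩
    show Hsub.mkQ (χ (r, t)) = Hsub.mkQ ⟨(r, s), _⟩
    congr 1
    apply Subtype.ext
    rw [hχap]
    rw [← ht]
  set g : R × R →ₗ[R] (R ⧸ I) × (R ⧸ I) := LinearMap.prodMap I.mkQ I.mkQ with hgdef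
  have hgap : ∀ u v : R, g (u, v) = (I.mkQ u, I.mkQ v) := fun u v => rfl
  have hgsurj : Function.Surjective g := by
    rintro ⟨zu, zv⟩
    obtain ⟨u, rfl⟩ := Submodule.mkQ_surjective I zu
    obtain ⟨v, rfl⟩ := Submodule.mkQ_surjective I zv
    exact ⟨(u, v), rfl⟩
  have hker : LinearMap.ker f = LinearMap.ker g := by
    ext ⟨u, v⟩
    simp only [LinearMap.mem_ker]
    constructor
    · intro h
      have hmem : (u, x * v) ∈ LinearMap.range del := by
        have h1 : Hsub.mkQ (χ (u, v)) = 0 := h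
        rw [Submodule.mkQ_apply, Submodule.Quotient.mk_eq_zero] at h1
        have h2 := h1
        rw [hHsub, Submodule.mem_comap] at h2
        simpa [hχap] using h2
      obtain ⟨⟨r, s⟩, hrs⟩ := hmem
      rw [hdel] at hrs
      have hu : u = x * s := (congrArg Prod.fst hrs).symm
      have hv : x * v = 0 := (congrArg Prod.snd hrs).symm
      obtain ⟨t, ht⟩ := hannR v hv
      rw [hgap]
      have h1 : I.mkQ u = 0 := by
        rw [← LinearMap.mem_ker, Submodule.ker_mkQ, hI]
        exact Ideal.mem_span_singleton.mpr ⟨s, hu⟩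
      have h2 : I.mkQ v = 0 := by
        rw [← LinearMap.mem_ker, Submodule.ker_mkQ, hI]
        exact Ideal.mem_span_singleton.mpr ⟨t, ht⟩
      rw [h1, h2]
      rfl
    · intro h
      rw [hgap] at h
      have hu : u ∈ I := by
        rw [← Submodule.ker_mkQ I, LinearMap.mem_ker]
        exact congrArg Prod.fst h
      have hv : v ∈ I := by
        rw [← Submodule.ker_mkQ I, LinearMap.mem_ker]
        exact congrArg Prod.snd h
      rw [hI, Ideal.mem_span_singleton] at hu hv
      obtain ⟨su, hsu⟩ := hu
      obtain ⟨tv, htv⟩ := hv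
      show Hsub.mkQ (χ (u, v)) = 0
      rw [Submodule.mkQ_apply, Submodule.Quotient.mk_eq_zero, hHsub, Submodule.mem_comap]
      refine ⟨(0, su), ?_⟩
      rw [hdel]
      show ((x * su : R), (0 : R)) = ((χ (u, v) : R × R))
      rw [hχap]
      have : x * v = 0 := by rw [htv, ← mul_assoc, hx2, zero_mul]
      rw [this, hsu]
  exact ⟨((LinearMap.quotKerEquivOfSurjective f hfsurj).symm.trans
    (Submodule.quotEquivOfEq _ _ hker)).trans
    (LinearMap.quotKerEquivOfSurjective g hgsurj)⟩

private theorem aux_proj_ann' {R : Type} [CommRing R] {x : R}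
    (hx : ∀ c : R, x * c = 0 → ∃ d, c = x * d)
    {M : Type} [AddCommGroup M] [Module R M] [Module.Projective R M]
    (m : M) (hm : x • m = 0) : ∃ m', m = x • m' := by
  obtain ⟨s, hs⟩ := Module.projective_def.mp ‹Module.Projective R M›
  set c := s m with hc
  have hxc : ∀ a : M, x * c a = 0 := by
    intro a
    have h1 : x • c = 0 := by rw [hc, ← map_smul, hm, map_zero]
    have := congrFun (congrArg DFunLike.coe h1) a
    simpa using this
  choose dfun hd using fun a => hx (c a) (hxc a)
  refine ⟨∑ a ∈ c.support, dfun a • a, ?_⟩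
  have hm' : m = Finsupp.linearCombination R id c := (hs m).symm
  rw [hm', Finsupp.linearCombination_apply, Finsupp.sum, Finset.smul_sum]
  refine Finset.sum_congr rfl fun a _ => ?_
  rw [smul_smul, ← hd a, id]

private theorem aux_step' {R : Type} [CommRing R] (x : R)
    {A B C D : Type} [AddCommGroup A] [Module R A] [AddCommGroup B] [Module R B]
    [AddCommGroup C] [Module R C] [AddCommGroup D] [Module R D]
    (h : A →ₗ[R] B) (g : B →ₗ[R] C) (f : C →ₗ[R] D)
    (hgh : ∀ w, g (h w) = 0)
    (hex : ∀ c, f c = 0 → ∃ b, g b = c)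
    (hann : ∀ c : C, x • c = 0 → ∃ c', c = x • c')
    (p : C) (hp1 : f (x • p) = 0) (hp2 : ∀ u v, p ≠ g u + x • v) :
    ∃ u : B, g u = x • p ∧ ∀ w v, u ≠ h w + x • v := by
  obtain ⟨u, hu⟩ := hex _ hp1
  refine ⟨u, hu, fun w v heq => ?_⟩
  have h1 : x • p = x • g v := by
    rw [← hu, heq, map_add, map_smul, hgh, zero_add]
  have h2 : x • (p - g v) = 0 := by rw [smul_sub, h1, sub_self]
  obtain ⟨m, hmm⟩ := hann _ h2
  refine hp2 v m (eq_comm.mp ?_)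
  rw [← hmm]; abel

private theorem part4 {R : Type} [CommRing R] (x : R) (hx2 : x * x = 0)
    (hannR : ∀ c : R, x * c = 0 → ∃ d, c = x * d)
    (hone : (1 : R) ∉ Ideal.span {x})
    (P : ProjectiveResolution (ModuleCat.of R (R ⧸ Ideal.span {x}))) (N : ℕ) :
    ∃ i, N ≤ i ∧ ¬ Limits.IsZero (P.complex.X i) := by
  -- facts about the residue module
  have xkill : ∀ m : R ⧸ Ideal.span {x}, x • m = 0 := by
    intro m
    obtain ⟨r, rfl⟩ := Submodule.Quotient.mk_surjective _ m
    rw [← Submodule.Quotient.mk_smul, Submodule.Quotient.mk_eq_zero]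
    exact Ideal.mem_span_singleton.mpr (Dvd.intro r rfl)
  set t : R ⧸ Ideal.span {x} := Submodule.Quotient.mk 1 with htdef
  have ht : t ≠ 0 := by
    intro h
    rw [htdef, Submodule.Quotient.mk_eq_zero] at h
    exact hone h
  -- the augmentation
  set ε : P.complex.X 0 →ₗ[R] (R ⧸ Ideal.span {x}) := (P.π.f 0 : P.complex.X 0 ⟶ _).hom with hε
  have hεsurj : Function.Surjective ε :=
    (ModuleCat.epi_iff_surjective (P.π.f 0)).mp inferInstance
  have hεd : ∀ u : P.complex.X 1, ε (P.complex.d 1 0 u) = 0 := fun u =>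
    LinearMap.congr_fun (congrArg ModuleCat.Hom.hom P.complex_d_comp_π_f_zero) u
  -- projectivity of terms
  have hproj : ∀ i, Module.Projective R (P.complex.X i) := fun i =>
    (IsProjective.iff_projective _).mpr (P.projective i)
  have hann : ∀ i (c : P.complex.X i), x • c = 0 → ∃ c', c = x • c' := fun i => by
    haveI := hproj i
    exact fun c hc => aux_proj_ann' hannR c hc
  -- exactness
  have hex0 : ∀ z : P.complex.X 0, ε z = 0 → ∃ y, P.complex.d 1 0 y = z := by
    have := (ShortComplex.moduleCat_exact_iff _).mp P.exact₀
    exact fun z hz => this z hz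
  have hexS : ∀ n (z : P.complex.X (n + 1)), P.complex.d (n + 1) n z = 0 →
      ∃ y, P.complex.d (n + 2) (n + 1) y = z := fun n => by
    have := (ShortComplex.moduleCat_exact_iff _).mp (P.exact_succ n)
    exact fun z hz => this z hz
  have hdd : ∀ n (w : P.complex.X (n + 2)),
      P.complex.d (n + 1) n (P.complex.d (n + 2) (n + 1) w) = 0 := fun n w =>
    LinearMap.congr_fun (congrArg ModuleCat.Hom.hom (P.complex.d_comp_d (n + 2) (n + 1) n)) w
  -- the main induction
  have main : ∀ i : ℕ, ∃ p : P.complex.X i,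
      (P.complex.d i (i - 1)) (x • p) = 0 ∧
      ∀ u v, p ≠ P.complex.d (i + 1) i u + x • v := by
    intro i
    induction i with
    | zero =>
      obtain ⟨p, hp⟩ := hεsurj t
      refine ⟨p, ?_, ?_⟩
      · rw [P.complex.shape 0 (0 - 1) (by simp)]
        rfl
      · intro u v heq
        apply ht
        rw [← hp, heq, map_add, hεd, map_smul, xkill, zero_add]
    | succ i ih =>
      obtain ⟨p, hp1, hp2⟩ := ih
      have hstep : ∃ u : P.complex.X (i + 1), P.complex.d (i + 1) i u = x • p ∧
          ∀ w v, u ≠ P.complex.d (i + 2) (i + 1) w + x • v := by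
        cases i with
        | zero =>
          exact aux_step' x (P.complex.d 2 1).hom (P.complex.d 1 0).hom ε (hdd 0) hex0 (hann 0) p
            (by rw [map_smul, xkill]) hp2
        | succ j =>
          exact aux_step' x (P.complex.d (j + 3) (j + 2)).hom (P.complex.d (j + 2) (j + 1)).hom
            (P.complex.d (j + 1) j).hom (hdd (j + 1)) (hexS j) (hann (j + 1)) p hp1 hp2
      obtain ⟨u, hu1, hu2⟩ := hstep
      refine ⟨u, ?_, hu2⟩
      have : P.complex.d (i + 1) i (x • u) = 0 := by
        rw [map_smul, hu1, smul_smul, hx2, zero_smul]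
      simpa using this
  obtain ⟨p, hp1, hp2⟩ := main N
  refine ⟨N, le_rfl, fun hz => ?_⟩
  have hid : (𝟙 (P.complex.X N) : P.complex.X N ⟶ P.complex.X N) = 0 := hz.eq_of_src _ _
  have hp0 : p = 0 := LinearMap.congr_fun (congrArg ModuleCat.Hom.hom hid) p
  exact hp2 0 0 (by rw [hp0, map_zero, smul_zero, add_zero])

/-- Over `R = k[x]/(x²)`, the free differential module `D = R ⊕ R` with differential
`(r, s) ↦ (x·s, 0)` (the matrix `[[0, x], [0, 0]]`, of degree `a` after twisting) squares to
zero and is minimal, its homology is isomorphic to `k ⊕ k = R/(x) ⊕ R/(x)`, and `R/(x)` has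
infinite projective dimension over `R` (every projective resolution is nonzero in arbitrarily
high homological degrees). -/
theorem stmt17 {k : Type} [Field k] (a : ℤ) :
    let R := Polynomial k ⧸ Ideal.span {(Polynomial.X : Polynomial k) ^ 2}
    let x : R := Ideal.Quotient.mk _ Polynomial.X
    let del : R × R →ₗ[R] R × R :=
      (LinearMap.inl R R R) ∘ₗ (LinearMap.mulLeft R x) ∘ₗ (LinearMap.snd R R R)
    del ∘ₗ del = 0 ∧
    (∀ p : R × R, (del p).1 ∈ Ideal.span {x} ∧ (del p).2 ∈ Ideal.span {x}) ∧
    Nonempty ((LinearMap.ker del ⧸ (LinearMap.range del).comap (LinearMap.ker del).subtype)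
      ≃ₗ[R] ((R ⧸ Ideal.span {x}) × (R ⧸ Ideal.span {x}))) ∧
    (∀ (P : ProjectiveResolution (ModuleCat.of R (R ⧸ Ideal.span {x}))) (N : ℕ),
      ∃ i, N ≤ i ∧ ¬ Limits.IsZero (P.complex.X i)) := by
  intro R x del
  have hdel : ∀ p : R × R, del p = (x * p.2, 0) := fun p => rfl
  have hx2 : x * x = 0 := aux_xx_sq
  have hannR : ∀ c : R, x * c = 0 → ∃ d, c = x * d := aux_ann
  have hone : (1 : R) ∉ Ideal.span {x} := aux_one_not_mem
  refine ⟨?_, ?_, ?_, ?_⟩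
  · refine LinearMap.ext fun p => ?_
    rw [LinearMap.comp_apply, hdel, hdel]
    simp
  · intro p
    constructor
    · rw [hdel]
      exact Ideal.mem_span_singleton.mpr (dvd_mul_right x p.2)
    · rw [hdel]
      exact Submodule.zero_mem _
  · exact part3 x hx2 hannR del hdel
  · exact fun P N => part4 x hx2 hannR hone P N
end
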